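/- Let ν₁, …, ν_K and ν'₁, …, ν'_K be probability distributions on countable sets, and let ε₁, …, ε_K ≥ 0 and δ₁, …, δ_K ∈ [0,1] be such that for each j and every subset S of outcomes, ν_j(S) ≤ e^{ε_j} · ν'_j(S) + δ_j and ν'_j(S) ≤ e^{ε_j} · ν_j(S) + δ_j. Then the product distributions ν₁ ⊗ ⋯ ⊗ ν_K and ν'₁ ⊗ ⋯ ⊗ ν'_K satisfy, for every subset S of the product space, (ν₁ ⊗ ⋯ ⊗ ν_K)(S) ≤ e^{Σ_j ε_j} · (ν'₁ ⊗ ⋯ ⊗ ν'_K)(S) + Σ_j δ_j, and symmetrically with the roles of ν and ν' exchanged. -/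

import Mathlib

open scoped ENNReal

noncomputable def setProb {Ω : Type*} (ν : Ω → ℝ≥0∞) (S : Set Ω) : ℝ≥0∞ :=
  ∑' x : S, ν x

def IsProbDist {Ω : Type*} (ν : Ω → ℝ≥0∞) : Prop :=
  ∑' x, ν x = 1

lemma setProb_le_one {Ω : Type*} {ν : Ω → ℝ≥0∞} (h : ∑' x, ν x = 1) (S : Set Ω) :
    setProb ν S ≤ 1 := by
  rw [setProb, tsum_subtype, ← h]
  exact ENNReal.tsum_le_tsum fun x => Set.indicator_le_self S ν x

lemma setProb_equiv {α β : Type*} (e : α ≃ β) (ν : β → ℝ≥0∞) (S : Set β) :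
    setProb (fun a => ν (e a)) (e ⁻¹' S) = setProb ν S := by
  rw [setProb, setProb]
  calc ∑' x : (e ⁻¹' S : Set α), ν (e x)
      = ∑' a, (e ⁻¹' S).indicator (fun a => ν (e a)) a := tsum_subtype (e ⁻¹' S) (fun a => ν (e a))
    _ = ∑' a, S.indicator ν (e a) := ?_
    _ = ∑' b, S.indicator ν b := Equiv.tsum_eq e (S.indicator ν)
    _ = ∑' x : (S : Set β), ν x := (tsum_subtype _ _).symm
  refine tsum_congr fun a => ?_
  by_cases h : e a ∈ S
  · rw [Set.indicator_of_mem h, Set.indicator_of_mem (by exact h)]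
  · rw [Set.indicator_of_notMem h, Set.indicator_of_notMem (by exact h)]

lemma fun_ind {Ω : Type*} (ν ν' : Ω → ℝ≥0∞) (E D : ℝ≥0∞) (hE : E ≠ ∞)
    (hν' : ∑' x, ν' x = 1)
    (hind : ∀ S : Set Ω, setProb ν S ≤ E * setProb ν' S + D)
    (g : Ω → ℝ≥0∞) (hg : ∀ x, g x ≤ 1) :
    ∑' x, ν x * g x ≤ E * (∑' x, ν' x * g x) + D := by
  have h1 : ∀ x, ν x * g x ≤ E * ν' x * g x + (ν x - E * ν' x) := by
    intro x
    have hx : ν x = min (ν x) (E * ν' x) + (ν x - E * ν' x) := by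
      rcases le_total (ν x) (E * ν' x) with h | h
      · simp [min_eq_left h, tsub_eq_zero_of_le h]
      · rw [min_eq_right h, add_comm, tsub_add_cancel_of_le h]
    calc ν x * g x = min (ν x) (E * ν' x) * g x + (ν x - E * ν' x) * g x := by
          rw [← add_mul, ← hx]
      _ ≤ E * ν' x * g x + (ν x - E * ν' x) * 1 :=
          add_le_add (mul_le_mul_left (min_le_right _ _) _)
            (mul_le_mul_right (hg x) _)
      _ = E * ν' x * g x + (ν x - E * ν' x) := by rw [mul_one]
  have hsub : ∑' x, (ν x - E * ν' x) ≤ D := by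
    set A : Set Ω := {x | E * ν' x < ν x} with hA
    have h2 : ∀ x, ν x - E * ν' x = A.indicator (fun x => ν x - E * ν' x) x := by
      intro x
      by_cases hx : x ∈ A
      · rw [Set.indicator_of_mem hx]
      · rw [Set.indicator_of_notMem hx, tsub_eq_zero_of_le (not_lt.1 hx)]
    have hfin : (∑' x : A, E * ν' x) ≠ ∞ := by
      refine ne_top_of_le_ne_top (by simp [hE] : E * 1 ≠ ∞) ?_
      rw [ENNReal.tsum_mul_left]
      exact mul_le_mul_right (setProb_le_one hν' A) E
    have key : (∑' x : A, (ν x - E * ν' x)) + (∑' x : A, E * ν' x) = ∑' x : A, ν x := by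
      rw [← ENNReal.tsum_add]
      exact tsum_congr fun x => tsub_add_cancel_of_le (le_of_lt x.2)
    have hAle : (∑' x : A, ν x) ≤ D + ∑' x : A, E * ν' x := by
      have := hind A
      rw [setProb, setProb] at this
      calc (∑' x : A, ν x) ≤ E * (∑' x : A, ν' x) + D := this
        _ = D + ∑' x : A, E * ν' x := by rw [ENNReal.tsum_mul_left, add_comm]
    have : (∑' x : A, (ν x - E * ν' x)) + (∑' x : A, E * ν' x)
        ≤ D + ∑' x : A, E * ν' x := key ▸ hAle
    have hres : (∑' x : A, (ν x - E * ν' x)) ≤ D :=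
      (ENNReal.add_le_add_iff_right hfin).1 this
    calc ∑' x, (ν x - E * ν' x) = ∑' x, A.indicator (fun x => ν x - E * ν' x) x :=
          tsum_congr h2
      _ = ∑' x : A, (ν x - E * ν' x) := (tsum_subtype A _).symm
      _ ≤ D := hres
  calc ∑' x, ν x * g x ≤ ∑' x, (E * ν' x * g x + (ν x - E * ν' x)) :=
        ENNReal.tsum_le_tsum h1
    _ = ∑' x, E * ν' x * g x + ∑' x, (ν x - E * ν' x) := ENNReal.tsum_add
    _ ≤ E * (∑' x, ν' x * g x) + D := by
        refine add_le_add ?_ hsub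
        rw [← ENNReal.tsum_mul_left]
        exact le_of_eq (tsum_congr fun x => (mul_assoc _ _ _))

lemma setProb_prod {Ω₁ Ω₂ : Type*} (ν₁ : Ω₁ → ℝ≥0∞) (ν₂ : Ω₂ → ℝ≥0∞) (S : Set (Ω₁ × Ω₂)) :
    setProb (fun p => ν₁ p.1 * ν₂ p.2) S
      = ∑' x, ν₁ x * setProb ν₂ {y | (x, y) ∈ S} := by
  rw [setProb]
  calc ∑' p : (S : Set (Ω₁ × Ω₂)), ν₁ (p : Ω₁ × Ω₂).1 * ν₂ (p : Ω₁ × Ω₂).2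
      = ∑' p : Ω₁ × Ω₂, S.indicator (fun p => ν₁ p.1 * ν₂ p.2) p := tsum_subtype S (fun p => ν₁ p.1 * ν₂ p.2)
    _ = ∑' (x) (y), S.indicator (fun p => ν₁ p.1 * ν₂ p.2) (x, y) := ENNReal.tsum_prod'
    _ = ∑' x, ν₁ x * setProb ν₂ {y | (x, y) ∈ S} := ?_
  refine tsum_congr fun x => ?_
  rw [setProb]
  calc (∑' y, S.indicator (fun p => ν₁ p.1 * ν₂ p.2) (x, y))
      = ∑' y, ({y | (x, y) ∈ S}).indicator (fun y => ν₁ x * ν₂ y) y := ?_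
    _ = ∑' y : {y | (x, y) ∈ S}, ν₁ x * ν₂ y := (tsum_subtype _ _).symm
    _ = ν₁ x * ∑' y : {y | (x, y) ∈ S}, ν₂ y := ENNReal.tsum_mul_left
  refine tsum_congr fun y => ?_
  by_cases h : (x, y) ∈ S
  · rw [Set.indicator_of_mem h, Set.indicator_of_mem (by exact h)]
  · rw [Set.indicator_of_notMem h, Set.indicator_of_notMem (by exact h)]

lemma step {Ω₁ Ω₂ : Type*} (ν₁ ν₁' : Ω₁ → ℝ≥0∞) (ν₂ ν₂' : Ω₂ → ℝ≥0∞)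
    (E₁ E₂ D₁ D₂ : ℝ≥0∞) (hE₁ : E₁ ≠ ∞)
    (h₁ : ∑' x, ν₁ x = 1) (h₁' : ∑' x, ν₁' x = 1) (h₂ : ∑' x, ν₂ x = 1)
    (hind₁ : ∀ S, setProb ν₁ S ≤ E₁ * setProb ν₁' S + D₁)
    (hind₂ : ∀ S, setProb ν₂ S ≤ E₂ * setProb ν₂' S + D₂)
    (S : Set (Ω₁ × Ω₂)) :
    setProb (fun p => ν₁ p.1 * ν₂ p.2) S ≤
      E₁ * E₂ * setProb (fun p => ν₁' p.1 * ν₂' p.2) S + (D₁ + D₂) := by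
  set g : Ω₁ → ℝ≥0∞ := fun x => min 1 (E₂ * setProb ν₂' {y | (x, y) ∈ S}) with hgdef
  have hg1 : ∀ x, g x ≤ 1 := fun x => min_le_left _ _
  have hkey : ∀ x, setProb ν₂ {y | (x, y) ∈ S} ≤ g x + D₂ := by
    intro x
    rcases le_total 1 (E₂ * setProb ν₂' {y | (x, y) ∈ S}) with h | h
    · rw [hgdef]
      simp only [min_eq_left h]
      exact le_add_right (setProb_le_one h₂ _)
    · rw [hgdef]
      simp only [min_eq_right h]
      exact hind₂ _
  rw [setProb_prod, setProb_prod]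
  calc ∑' x, ν₁ x * setProb ν₂ {y | (x, y) ∈ S}
      ≤ ∑' x, (ν₁ x * g x + ν₁ x * D₂) := by
        refine ENNReal.tsum_le_tsum fun x => ?_
        rw [← mul_add]
        exact mul_le_mul_right (hkey x) _
    _ = (∑' x, ν₁ x * g x) + (∑' x, ν₁ x) * D₂ := by
        rw [ENNReal.tsum_add, ENNReal.tsum_mul_right]
    _ = (∑' x, ν₁ x * g x) + D₂ := by rw [h₁, one_mul]
    _ ≤ (E₁ * (∑' x, ν₁' x * g x) + D₁) + D₂ :=
        add_le_add_left (fun_ind ν₁ ν₁' E₁ D₁ hE₁ h₁' hind₁ g hg1) D₂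
    _ ≤ (E₁ * (∑' x, ν₁' x * (E₂ * setProb ν₂' {y | (x, y) ∈ S})) + D₁) + D₂ := by
        refine add_le_add_left (add_le_add_left (mul_le_mul_right ?_ E₁) D₁) D₂
        exact ENNReal.tsum_le_tsum fun x => mul_le_mul_right (min_le_right _ _) _
    _ = E₁ * E₂ * (∑' x, ν₁' x * setProb ν₂' {y | (x, y) ∈ S}) + (D₁ + D₂) := by
        rw [add_assoc]
        congr 1
        rw [mul_assoc, ← ENNReal.tsum_mul_left (a := E₂)]
        congr 1
        exact tsum_congr fun x => by ring

lemma prob_pi : ∀ (K : ℕ) (Ω : Fin K → Type u) (ν : ∀ j, Ω j → ℝ≥0∞),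
    (∀ j, ∑' x, ν j x = 1) → ∑' f : ∀ j, Ω j, ∏ j, ν j (f j) = 1 := by
  intro K
  induction K with
  | zero =>
    intro Ω ν _
    simp only [Finset.univ_eq_empty, Finset.prod_empty]
    rw [tsum_eq_single (default : ∀ j, Ω j) (fun b hb => absurd (Subsingleton.elim b default) hb)]
  | succ K ih =>
    intro Ω ν hν
    rw [← Equiv.tsum_eq (Fin.consEquiv Ω) (fun f => ∏ j, ν j (f j))]
    have : ∀ p : Ω 0 × (∀ i : Fin K, Ω i.succ),
        (∏ j, ν j (Fin.consEquiv Ω p j)) = ν 0 p.1 * ∏ i, ν i.succ (p.2 i) := by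
      intro p
      rw [Fin.prod_univ_succ]
      simp [Fin.consEquiv]
    rw [tsum_congr this, ENNReal.tsum_prod']
    calc (∑' (x) (r : ∀ i : Fin K, Ω i.succ), ν 0 x * ∏ i, ν i.succ (r i))
        = ∑' x, ν 0 x * ∑' r : ∀ i : Fin K, Ω i.succ, ∏ i, ν i.succ (r i) := by
          exact tsum_congr fun x => ENNReal.tsum_mul_left
      _ = 1 := by
          rw [ih (fun i => Ω i.succ) (fun i => ν i.succ) (fun i => hν i.succ)]
          simp [hν 0]

set_option maxHeartbeats 1000000 in
lemma main_aux : ∀ (K : ℕ) (Ω : Fin K → Type u) (ν ν' : ∀ j : Fin K, Ω j → ℝ≥0∞)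
    (_ : ∀ j, IsProbDist (ν j)) (_ : ∀ j, IsProbDist (ν' j))
    (ε δ : Fin K → ℝ) (_ : ∀ j, 0 ≤ δ j)
    (_ : ∀ j, ∀ S : Set (Ω j),
      setProb (ν j) S ≤ ENNReal.ofReal (Real.exp (ε j)) * setProb (ν' j) S +
        ENNReal.ofReal (δ j) ∧
      setProb (ν' j) S ≤ ENNReal.ofReal (Real.exp (ε j)) * setProb (ν j) S +
        ENNReal.ofReal (δ j))
    (S : Set (∀ j, Ω j)),
      setProb (fun f : (∀ j, Ω j) => ∏ j, ν j (f j)) S ≤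
        ENNReal.ofReal (Real.exp (∑ j, ε j)) *
          setProb (fun f : (∀ j, Ω j) => ∏ j, ν' j (f j)) S +
        ENNReal.ofReal (∑ j, δ j) ∧
      setProb (fun f : (∀ j, Ω j) => ∏ j, ν' j (f j)) S ≤
        ENNReal.ofReal (Real.exp (∑ j, ε j)) *
          setProb (fun f : (∀ j, Ω j) => ∏ j, ν j (f j)) S +
        ENNReal.ofReal (∑ j, δ j) := by
  intro K
  induction K with
  | zero =>
    intro Ω ν ν' _ _ ε δ _ _ S
    simp only [Finset.univ_eq_empty, Finset.prod_empty, Finset.sum_empty, Real.exp_zero,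
      ENNReal.ofReal_one, one_mul, ENNReal.ofReal_zero, add_zero]
    exact ⟨le_refl _, le_refl _⟩
  | succ K ih =>
    intro Ω ν ν' hprob hprob' ε δ hδ0 hind S
    set e := Fin.consEquiv Ω with he
    -- rewrite setProb over the Pi type as setProb over a product type
    have hrw : ∀ μ : ∀ j : Fin (K+1), Ω j → ℝ≥0∞,
        setProb (fun f : (∀ j, Ω j) => ∏ j, μ j (f j)) S =
        setProb (fun p : Ω 0 × (∀ i : Fin K, Ω i.succ) =>
          μ 0 p.1 * ∏ i, μ i.succ (p.2 i)) (e ⁻¹' S) := by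
      intro μ
      rw [← setProb_equiv e (fun f => ∏ j, μ j (f j)) S]
      congr 1
      funext p
      rw [Fin.prod_univ_succ]
      simp [he, Fin.consEquiv]
    rw [hrw ν, hrw ν']
    have hE₁ : (ENNReal.ofReal (Real.exp (ε 0))) ≠ ∞ := ENNReal.ofReal_ne_top
    have hprod : ∑' r : ∀ i : Fin K, Ω i.succ, ∏ i, ν i.succ (r i) = 1 :=
      prob_pi K (fun i => Ω i.succ) (fun i => ν i.succ) (fun i => hprob i.succ)
    have hprod' : ∑' r : ∀ i : Fin K, Ω i.succ, ∏ i, ν' i.succ (r i) = 1 :=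
      prob_pi K (fun i => Ω i.succ) (fun i => ν' i.succ) (fun i => hprob' i.succ)
    have ihspec := ih (fun i => Ω i.succ) (fun i => ν i.succ) (fun i => ν' i.succ)
      (fun i => hprob i.succ) (fun i => hprob' i.succ)
      (fun i => ε i.succ) (fun i => δ i.succ) (fun i => hδ0 i.succ)
      (fun i T => hind i.succ T)
    have hEsplit : ENNReal.ofReal (Real.exp (∑ j : Fin (K+1), ε j)) =
        ENNReal.ofReal (Real.exp (ε 0)) * ENNReal.ofReal (Real.exp (∑ i : Fin K, ε i.succ)) := by
      rw [Fin.sum_univ_succ, Real.exp_add, ENNReal.ofReal_mul (Real.exp_pos _).le]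
    have hDsplit : ENNReal.ofReal (∑ j : Fin (K+1), δ j) =
        ENNReal.ofReal (δ 0) + ENNReal.ofReal (∑ i : Fin K, δ i.succ) := by
      rw [Fin.sum_univ_succ, ENNReal.ofReal_add (hδ0 0) (Finset.sum_nonneg fun i _ => hδ0 i.succ)]
    rw [hEsplit, hDsplit]
    constructor
    · exact step (ν 0) (ν' 0) (fun r => ∏ i, ν i.succ (r i)) (fun r => ∏ i, ν' i.succ (r i))
        _ _ _ _ hE₁ (hprob 0) (hprob' 0) hprod
        (fun T => (hind 0 T).1) (fun T => (ihspec T).1) (e ⁻¹' S)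
    · exact step (ν' 0) (ν 0) (fun r => ∏ i, ν' i.succ (r i)) (fun r => ∏ i, ν i.succ (r i))
        _ _ _ _ hE₁ (hprob' 0) (hprob 0) hprod'
        (fun T => (hind 0 T).2) (fun T => (ihspec T).2) (e ⁻¹' S)

theorem composition_heterogeneous
    (K : ℕ)
    (Ω : Fin K → Type*) [∀ j, Countable (Ω j)]
    (ν ν' : ∀ j : Fin K, Ω j → ℝ≥0∞)
    (hprob : ∀ j, IsProbDist (ν j)) (hprob' : ∀ j, IsProbDist (ν' j))
    (ε δ : Fin K → ℝ) (hε : ∀ j, 0 ≤ ε j) (hδ0 : ∀ j, 0 ≤ δ j) (hδ1 : ∀ j, δ j ≤ 1)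
    (hind : ∀ j, ∀ S : Set (Ω j),
      setProb (ν j) S ≤ ENNReal.ofReal (Real.exp (ε j)) * setProb (ν' j) S +
        ENNReal.ofReal (δ j) ∧
      setProb (ν' j) S ≤ ENNReal.ofReal (Real.exp (ε j)) * setProb (ν j) S +
        ENNReal.ofReal (δ j)) :
    ∀ S : Set (∀ j, Ω j),
      setProb (fun f : (∀ j, Ω j) => ∏ j, ν j (f j)) S ≤
        ENNReal.ofReal (Real.exp (∑ j, ε j)) *
          setProb (fun f : (∀ j, Ω j) => ∏ j, ν' j (f j)) S +
        ENNReal.ofReal (∑ j, δ j) ∧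
      setProb (fun f : (∀ j, Ω j) => ∏ j, ν' j (f j)) S ≤
        ENNReal.ofReal (Real.exp (∑ j, ε j)) *
          setProb (fun f : (∀ j, Ω j) => ∏ j, ν j (f j)) S +
        ENNReal.ofReal (∑ j, δ j) := fun S =>
  main_aux K Ω ν ν' hprob hprob' ε δ hδ0 hind S
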